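/- Let Y be a free ℤ-module of finite rank and (α_i, α_i∨), i ∈ I a finite family of root/coroot pairs (α_i ∈ Hom_ℤ(Y,ℤ), α_i∨ ∈ Y, ⟨α_i, α_i∨⟩ = 2). Let Q : Y → ℤ be a quadratic form invariant under every reflection s_{α_i}. Fix a positive integer n and set Y_{Q,n} := {y ∈ Y : n | B_Q(y, z) for all z ∈ Y}, Y_{Q,n}^{sc} := ℤ-span of {(n / gcd(n, Q(α_i∨)))·α_i∨ : i ∈ I}, and J := n·Y + Y_{Q,n}^{sc}. If y ∈ Y_{Q,n} and k is an odd integer with k·y ∈ J, then n divides Q(y). -/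

import Mathlib

/-- With `Q` a reflection-invariant `ℤ`-valued quadratic form on a lattice `Y`,
`Y_{Q,n} = {y : n ∣ B_Q(y, z) for all z}`, `Y_{Q,n}^{sc}` the span of the modified
coroots, and `J = n·Y + Y_{Q,n}^{sc}`: if `y ∈ Y_{Q,n}` and `k` is an odd integer
with `k • y ∈ J`, then `n ∣ Q(y)`. -/
theorem stmt_4 (Y : Type*) [AddCommGroup Y] [Module ℤ Y]
    [Module.Free ℤ Y] [Module.Finite ℤ Y]
    (Q : QuadraticForm ℤ Y) (I : Type*) [Finite I]
    (α : I → (Y →ₗ[ℤ] ℤ)) (αv : I → Y)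
    (hpair : ∀ i, α i (αv i) = 2)
    (hW : ∀ (i : I) (y : Y), Q (y - α i y • αv i) = Q y)
    (n : ℕ) (hn : 0 < n) (y : Y)
    (hy : ∀ z : Y, (n : ℤ) ∣ QuadraticMap.polar (⇑Q) y z)
    (k : ℤ) (hk : Odd k)
    (hky : k • y ∈ (LinearMap.range ((n : ℤ) • (LinearMap.id : Y →ₗ[ℤ] Y)) ⊔
        Submodule.span ℤ
          (Set.range fun i : I => ((n / Int.gcd (n : ℤ) (Q (αv i)) : ℕ) : ℤ) • αv i))) :
    (n : ℤ) ∣ Q y := by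
  -- helper identities bridging `zsmul` with the quadratic form lemmas
  have Qsmul : ∀ (a : ℤ) (v : Y), Q (a • v) = a * a * Q v := by
    intro a v
    rw [← Int.cast_smul_eq_zsmul ℤ a v, QuadraticMap.map_smul, smul_eq_mul]
    norm_num
  have Bl : ∀ (a : ℤ) (v u : Y),
      QuadraticMap.polar (⇑Q) (a • v) u = a * QuadraticMap.polar (⇑Q) v u := by
    intro a v u
    rw [← Int.cast_smul_eq_zsmul ℤ a v, QuadraticMap.polar_smul_left, smul_eq_mul]
    norm_num
  have Br : ∀ (a : ℤ) (v u : Y),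
      QuadraticMap.polar (⇑Q) v (a • u) = a * QuadraticMap.polar (⇑Q) v u := by
    intro a v u
    rw [← Int.cast_smul_eq_zsmul ℤ a u, QuadraticMap.polar_smul_right, smul_eq_mul]
    norm_num
  have Bself : ∀ v : Y, QuadraticMap.polar (⇑Q) v v = 2 * Q v := fun v =>
    (QuadraticMap.polar_self Q v).trans (by norm_num)
  -- Reflection invariance gives polar Q z (αv i) = α i z * Q (αv i).
  have hrefl : ∀ (i : I) (z : Y),
      QuadraticMap.polar (⇑Q) z (αv i) = α i z * Q (αv i) := by
    intro i z
    have key : ∀ w : Y,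
        α i w * QuadraticMap.polar (⇑Q) w (αv i) = α i w * (α i w * Q (αv i)) := by
      intro w
      have h1 : w - α i w • αv i = w + (-(α i w)) • αv i := by
        rw [neg_zsmul]
        exact sub_eq_add_neg w _
      have h := hW i w
      rw [h1, QuadraticMap.map_add (⇑Q) w _, Qsmul, Br] at h
      nlinarith [h]
    have e1 := key z
    have e2 := key (z + αv i)
    rw [map_add, hpair i, QuadraticMap.polar_add_left, Bself] at e2
    set p := QuadraticMap.polar (⇑Q) z (αv i)
    set c := α i z
    set q := Q (αv i)
    nlinarith [e1, e2]
  -- The submodule of elements w with n ∣ polar(w, -) and n ∣ Q w.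
  set S : Submodule ℤ Y :=
    { carrier := {w | (∀ z : Y, (n : ℤ) ∣ QuadraticMap.polar (⇑Q) w z) ∧ (n : ℤ) ∣ Q w}
      add_mem' := by
        rintro a b ⟨ha1, ha2⟩ ⟨hb1, hb2⟩
        refine ⟨fun z => ?_, ?_⟩
        · rw [QuadraticMap.polar_add_left]
          exact dvd_add (ha1 z) (hb1 z)
        · rw [QuadraticMap.map_add (⇑Q) a b]
          exact dvd_add (dvd_add ha2 hb2) (ha1 b)
      zero_mem' := by
        refine ⟨fun z => ?_, ?_⟩
        · rw [QuadraticMap.polar_zero_left]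
          exact dvd_zero _
        · rw [QuadraticMap.map_zero]
          exact dvd_zero _
      smul_mem' := by
        rintro c a ⟨ha1, ha2⟩
        refine ⟨fun z => ?_, ?_⟩
        · rw [QuadraticMap.polar_smul_left, smul_eq_mul]
          exact (ha1 z).mul_left c
        · rw [QuadraticMap.map_smul, smul_eq_mul]
          exact ha2.mul_left (c * c) } with hSdef
  -- generators lie in S
  have hgen : ∀ i : I,
      (((n / Int.gcd (n : ℤ) (Q (αv i)) : ℕ) : ℤ) • αv i) ∈ S := by
    intro i
    set g : ℕ := Int.gcd (n : ℤ) (Q (αv i)) with hg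
    set m : ℤ := ((n / g : ℕ) : ℤ) with hm
    have hgdvdn : (g : ℤ) ∣ (n : ℤ) := Int.gcd_dvd_left (n : ℤ) (Q (αv i))
    have hgdvdn' : g ∣ n := Int.ofNat_dvd.mp (by exact_mod_cast hgdvdn)
    have hgdvdq : (g : ℤ) ∣ Q (αv i) := Int.gcd_dvd_right (n : ℤ) (Q (αv i))
    have hmain : (n : ℤ) ∣ m * Q (αv i) := by
      obtain ⟨q', hq'⟩ := hgdvdq
      have hng : ((n / g) * g : ℕ) = n := Nat.div_mul_cancel hgdvdn'
      refine ⟨q', ?_⟩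
      have hmg : m * (g : ℤ) = (n : ℤ) := by
        rw [hm, ← Nat.cast_mul, hng]
      rw [hq', ← mul_assoc, hmg]
    constructor
    · intro z
      rw [Bl, QuadraticMap.polar_comm, hrefl i z]
      have : m * (α i z * Q (αv i)) = α i z * (m * Q (αv i)) := by ring
      rw [this]
      exact hmain.mul_left _
    · rw [Qsmul]
      have : m * m * Q (αv i) = m * (m * Q (αv i)) := by ring
      rw [this]
      exact hmain.mul_left _
  -- J ≤ S
  have hJ : (LinearMap.range ((n : ℤ) • (LinearMap.id : Y →ₗ[ℤ] Y)) ⊔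
      Submodule.span ℤ
        (Set.range fun i : I => ((n / Int.gcd (n : ℤ) (Q (αv i)) : ℕ) : ℤ) • αv i)) ≤ S := by
    refine sup_le ?_ ?_
    · rintro w ⟨z, rfl⟩
      have hz : ((n : ℤ) • (LinearMap.id : Y →ₗ[ℤ] Y)) z = (n : ℤ) • z := rfl
      rw [hz]
      constructor
      · intro u
        rw [Bl]
        exact Dvd.dvd.mul_right ⟨1, (mul_one _).symm⟩ _
      · rw [Qsmul]
        exact Dvd.dvd.mul_right (Dvd.dvd.mul_right ⟨1, (mul_one _).symm⟩ _) _
    · rw [Submodule.span_le]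
      rintro w ⟨i, rfl⟩
      exact hgen i
  -- conclude
  have hmem := hJ hky
  have hQky : (n : ℤ) ∣ Q (k • y) := hmem.2
  rw [Qsmul] at hQky
  have h2 : (n : ℤ) ∣ 2 * Q y := by
    have := hy y
    rwa [Bself] at this
  obtain ⟨m, rfl⟩ := hk
  have : Q y = (2 * m + 1) * (2 * m + 1) * Q y - (2 * m * m + 2 * m) * (2 * Q y) := by
    ring
  rw [this]
  exact dvd_sub hQky (h2.mul_left _)
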